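/- Let M ∈ ℝ^{m×s} have rank s and let v ∈ ℝ^m with ‖v‖₂ = 1. Set W := Mᵀ(I − vvᵀ)M, where I is the m×m identity matrix. Then W is invertible (in fact, symmetric positive definite) if and only if v ∉ range(M), and in the invertible case W⁻¹ = (MᵀM)⁻¹ + (M†v)(M†v)ᵀ / (1 − vᵀM M†v), where M† := (MᵀM)⁻¹Mᵀ. -/

import Mathlib

open Matrix Filter Topology
open scoped BigOperators Classical

noncomputable def l2 {k : ℕ} (x : Fin k → ℝ) : ℝ := Real.sqrt (∑ i, (x i) ^ 2)

noncomputable def l1 {k : ℕ} (x : Fin k → ℝ) : ℝ := ∑ i, |x i|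

noncomputable def linf {k : ℕ} (x : Fin k → ℝ) : ℝ := sSup (Set.range fun i => |x i|)

noncomputable def dotp {k : ℕ} (x y : Fin k → ℝ) : ℝ := ∑ i, x i * y i

noncomputable def pinv {m s : ℕ} (M : Matrix (Fin m) (Fin s) ℝ) :
    Matrix (Fin s) (Fin m) ℝ := (Mᵀ * M)⁻¹ * Mᵀ

section aux
variable {m s : ℕ}

lemma aux_inj (M : Matrix (Fin m) (Fin s) ℝ) (hrank : M.rank = s) :
    Function.Injective M.mulVec := by
  have h := M.mulVecLin.finrank_range_add_finrank_ker
  rw [Module.finrank_fin_fun] at h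
  have hr : Module.finrank ℝ (LinearMap.range M.mulVecLin) = s := hrank
  have hker : LinearMap.ker M.mulVecLin = ⊥ :=
    Submodule.finrank_eq_zero.mp (by omega)
  have hinj := LinearMap.ker_eq_bot.mp hker
  intro x y hxy
  exact hinj (by simpa [Matrix.mulVecLin_apply] using hxy)

lemma aux_vmv_mulVec (v w : Fin m → ℝ) (y : Fin m → ℝ) :
    vecMulVec v w *ᵥ y = (w ⬝ᵥ y) • v := by
  ext i
  simp [vecMulVec_apply, mulVec, dotProduct, Finset.mul_sum, mul_assoc, mul_comm, mul_left_comm]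

lemma aux_quad (M : Matrix (Fin m) (Fin s) ℝ) (v : Fin m → ℝ) (hvv : v ⬝ᵥ v = 1)
    (x : Fin s → ℝ) :
    x ⬝ᵥ ((Mᵀ * (1 - vecMulVec v v) * M) *ᵥ x)
      = (M *ᵥ x - (v ⬝ᵥ (M *ᵥ x)) • v) ⬝ᵥ (M *ᵥ x - (v ⬝ᵥ (M *ᵥ x)) • v) := by
  have h1 : (Mᵀ * (1 - vecMulVec v v) * M) *ᵥ x
      = Mᵀ *ᵥ ((1 - vecMulVec v v) *ᵥ (M *ᵥ x)) := by
    rw [← mulVec_mulVec, ← mulVec_mulVec]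
  rw [h1, sub_mulVec, one_mulVec, aux_vmv_mulVec, dotProduct_mulVec, vecMul_transpose]
  simp only [dotProduct_sub, sub_dotProduct, dotProduct_smul, smul_dotProduct, smul_eq_mul,
    hvv, dotProduct_comm (M *ᵥ x) v]
  ring

lemma aux_herm (M : Matrix (Fin m) (Fin s) ℝ) (v : Fin m → ℝ) :
    (Mᵀ * (1 - vecMulVec v v) * M).IsHermitian := by
  have h : (vecMulVec v v)ᵀ = vecMulVec v v := by
    ext i j; simp [vecMulVec_apply, mul_comm]
  show _ᴴ = _
  rw [conjTranspose_eq_transpose_of_trivial, transpose_mul, transpose_mul,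
    transpose_transpose, transpose_sub, transpose_one, h, ← Matrix.mul_assoc]

lemma aux_dp_nonneg (y : Fin m → ℝ) : 0 ≤ y ⬝ᵥ y :=
  Finset.sum_nonneg fun i _ => mul_self_nonneg _

lemma aux_dp_pos {y : Fin m → ℝ} (hy : y ≠ 0) : 0 < y ⬝ᵥ y :=
  lt_of_le_of_ne (aux_dp_nonneg y) fun h => hy (dotProduct_self_eq_zero.mp h.symm)

end aux

section aux2
variable {m s : ℕ}

-- A = MᵀM is PosDef
lemma aux_A_posdef (M : Matrix (Fin m) (Fin s) ℝ) (hinj : Function.Injective M.mulVec) :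
    (Mᵀ * M).PosDef := by
  apply PosDef.of_dotProduct_mulVec_pos
  · rw [← conjTranspose_eq_transpose_of_trivial M]
    exact isHermitian_conjTranspose_mul_self M
  · intro x hx
    have hy : M *ᵥ x ≠ 0 := fun h => hx (hinj (h.trans (M.mulVec_zero).symm))
    have : star x ⬝ᵥ ((Mᵀ * M) *ᵥ x) = (M *ᵥ x) ⬝ᵥ (M *ᵥ x) := by
      rw [star_trivial, ← mulVec_mulVec, dotProduct_mulVec, vecMul_transpose]
    rw [this]
    exact aux_dp_pos hy

-- W posdef when v not in range
lemma aux_W_posdef (M : Matrix (Fin m) (Fin s) ℝ) (v : Fin m → ℝ)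
    (hinj : Function.Injective M.mulVec) (hvv : v ⬝ᵥ v = 1)
    (hnr : ¬ ∃ x : Fin s → ℝ, M.mulVec x = v) :
    (Mᵀ * (1 - vecMulVec v v) * M).PosDef := by
  refine PosDef.of_dotProduct_mulVec_pos (aux_herm M v) fun x hx => ?_
  rw [star_trivial, aux_quad M v hvv]
  set z := M *ᵥ x - (v ⬝ᵥ (M *ᵥ x)) • v with hz
  have hzne : z ≠ 0 := by
    intro h0
    have hyz : M *ᵥ x = (v ⬝ᵥ (M *ᵥ x)) • v := by
      have := sub_eq_zero.mp h0
      exact this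
    have hyne : M *ᵥ x ≠ 0 := fun h => hx (hinj (h.trans (M.mulVec_zero).symm))
    set c := v ⬝ᵥ (M *ᵥ x) with hc
    have hcne : c ≠ 0 := by
      intro h; rw [h, zero_smul] at hyz; exact hyne hyz
    exact hnr ⟨c⁻¹ • x, by rw [M.mulVec_smul, hyz, smul_smul, inv_mul_cancel₀ hcne, one_smul]⟩
  exact aux_dp_pos hzne

end aux2

section aux3
variable {m s : ℕ}

lemma aux_quad' (M : Matrix (Fin m) (Fin s) ℝ) (v : Fin m → ℝ) (hvv : v ⬝ᵥ v = 1)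
    (x : Fin s → ℝ) :
    x ⬝ᵥ ((Mᵀ * (1 - vecMulVec v v) * M) *ᵥ x)
      = (M *ᵥ x) ⬝ᵥ (M *ᵥ x) - (v ⬝ᵥ (M *ᵥ x)) ^ 2 := by
  rw [aux_quad M v hvv x]
  simp only [dotProduct_sub, sub_dotProduct, dotProduct_smul, smul_dotProduct, smul_eq_mul,
    hvv, dotProduct_comm (M *ᵥ x) v]
  ring

lemma aux_not_posdef (M : Matrix (Fin m) (Fin s) ℝ) (v : Fin m → ℝ)
    (hvv : v ⬝ᵥ v = 1) (x : Fin s → ℝ) (hxv : M *ᵥ x = v) :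
    ¬ (Mᵀ * (1 - vecMulVec v v) * M).PosDef := by
  intro hpd
  have hxne : x ≠ 0 := by
    intro h; rw [h, mulVec_zero] at hxv; rw [← hxv] at hvv; simp at hvv
  have h := hpd.dotProduct_mulVec_pos hxne
  rw [star_trivial, aux_quad' M v hvv, hxv, hvv] at h
  norm_num at h

lemma aux_W_eq (M : Matrix (Fin m) (Fin s) ℝ) (v : Fin m → ℝ) :
    Mᵀ * (1 - vecMulVec v v) * M = Mᵀ * M - vecMulVec (Mᵀ *ᵥ v) (Mᵀ *ᵥ v) := by
  rw [Matrix.mul_sub, Matrix.mul_one, Matrix.sub_mul]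
  congr 1
  rw [vecMulVec_eq (Fin 1), vecMulVec_eq (Fin 1)]
  rw [← Matrix.mul_assoc Mᵀ]
  rw [Matrix.mul_assoc _ _ M]
  rw [← replicateCol_mulVec, ← replicateRow_vecMul, ← mulVec_transpose]

end aux3

section aux4
variable {m s : ℕ}

lemma aux_const_mul_row (t : ℝ) (w : Fin m → ℝ) :
    (of fun _ _ => t : Matrix (Fin 1) (Fin 1) ℝ) * replicateRow (Fin 1) w = t • replicateRow (Fin 1) w := by
  ext i j
  simp [Matrix.mul_apply, replicateRow_apply]

lemma aux_inverse (M : Matrix (Fin m) (Fin s) ℝ) (v : Fin m → ℝ)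
    (hAdet : IsUnit (Mᵀ * M).det)
    (hc : (1 : ℝ) - (Mᵀ *ᵥ v) ⬝ᵥ ((Mᵀ * M)⁻¹ *ᵥ (Mᵀ *ᵥ v)) ≠ 0) :
    (Mᵀ * (1 - vecMulVec v v) * M) *
      ((Mᵀ * M)⁻¹ + ((1 : ℝ) - (Mᵀ *ᵥ v) ⬝ᵥ ((Mᵀ * M)⁻¹ *ᵥ (Mᵀ *ᵥ v)))⁻¹ •
        vecMulVec ((Mᵀ * M)⁻¹ *ᵥ (Mᵀ *ᵥ v)) ((Mᵀ * M)⁻¹ *ᵥ (Mᵀ *ᵥ v))) = 1 := by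
  set A := Mᵀ * M with hA
  set u := Mᵀ *ᵥ v with hu
  set w := A⁻¹ *ᵥ u with hw
  set t := u ⬝ᵥ w with ht
  set c := (1 : ℝ) - t with hcdef
  have hAT : Aᵀ = A := by rw [hA, transpose_mul, transpose_transpose]
  have hA1 : A * A⁻¹ = 1 := mul_nonsing_inv _ hAdet
  have hAw : A *ᵥ w = u := by
    rw [hw, mulVec_mulVec, hA1, one_mulVec]
  have hP1 : A * vecMulVec w w = vecMulVec u w := by
    rw [vecMulVec_eq (Fin 1), vecMulVec_eq (Fin 1), ← Matrix.mul_assoc, ← replicateCol_mulVec, hAw]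
  have huAinv : u ᵥ* A⁻¹ = w := by
    rw [← mulVec_transpose, transpose_nonsing_inv, hAT, hw]
  have huA : vecMulVec u u * A⁻¹ = vecMulVec u w := by
    rw [vecMulVec_eq (Fin 1), vecMulVec_eq (Fin 1), Matrix.mul_assoc, ← replicateRow_vecMul, huAinv]
  have hPP : vecMulVec u u * vecMulVec w w = t • vecMulVec u w := by
    rw [vecMulVec_eq (Fin 1), vecMulVec_eq (Fin 1), vecMulVec_eq (Fin 1)]
    rw [Matrix.mul_assoc, ← Matrix.mul_assoc (replicateRow (Fin 1) u)]
    rw [replicateRow_mul_replicateCol, ← ht]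
    erw [aux_const_mul_row]
    rw [Matrix.mul_smul]
  rw [aux_W_eq, Matrix.sub_mul, Matrix.mul_add, Matrix.mul_add, hA1,
    Matrix.mul_smul, hP1, Matrix.mul_smul, hPP, huA, smul_smul]
  have hcinv : c⁻¹ = 1 + c⁻¹ * t := by
    field_simp
    linarith [mul_comm c⁻¹ t]
  have h2 : c⁻¹ • vecMulVec u w = vecMulVec u w + (c⁻¹ * t) • vecMulVec u w := by
    conv_lhs => rw [hcinv]
    rw [add_smul, one_smul]
  rw [h2, add_sub_cancel_right]

end aux4


/-- Sherman–Morrison–Woodbury for W = Mᵀ(I − vvᵀ)M: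
if M has rank s and ‖v‖₂ = 1, then W is invertible (in fact symmetric
positive definite) iff v ∉ range M, and in that case
W⁻¹ = (MᵀM)⁻¹ + (M†v)(M†v)ᵀ / (1 − vᵀMM†v), where M† = (MᵀM)⁻¹Mᵀ. -/
theorem stmt_0 {m s : ℕ} (M : Matrix (Fin m) (Fin s) ℝ) (v : Fin m → ℝ)
    (hrank : M.rank = s) (hv : l2 v = 1) :
    ((IsUnit (Mᵀ * (1 - vecMulVec v v) * M) ∧ (Mᵀ * (1 - vecMulVec v v) * M).PosDef)
        ↔ v ∉ {w : Fin m → ℝ | ∃ x : Fin s → ℝ, M.mulVec x = w}) ∧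
      (v ∉ {w : Fin m → ℝ | ∃ x : Fin s → ℝ, M.mulVec x = w} →
        (Mᵀ * (1 - vecMulVec v v) * M)⁻¹
          = (Mᵀ * M)⁻¹
            + (1 - dotp v ((M * pinv M).mulVec v))⁻¹ •
                vecMulVec ((pinv M).mulVec v) ((pinv M).mulVec v)) := by
  have hinj := aux_inj M hrank
  have hvv : v ⬝ᵥ v = 1 := by
    have h0 : (0:ℝ) ≤ ∑ i, (v i) ^ 2 := Finset.sum_nonneg fun _ _ => sq_nonneg _
    have h1 : ∑ i, (v i) ^ 2 = 1 := by
      have := hv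
      unfold l2 at this
      nlinarith [Real.sq_sqrt h0]
    have h2 : v ⬝ᵥ v = ∑ i, (v i) ^ 2 := by simp [dotProduct, sq]
    rw [h2, h1]
  have hrange : v ∉ {w : Fin m → ℝ | ∃ x : Fin s → ℝ, M.mulVec x = w}
      ↔ ¬ ∃ x : Fin s → ℝ, M.mulVec x = v := Iff.rfl
  constructor
  · constructor
    · rintro ⟨-, hpd⟩ hmem
      obtain ⟨x, hxv⟩ := hmem
      exact aux_not_posdef M v hvv x hxv hpd
    · intro hnr
      have hpd := aux_W_posdef M v hinj hvv (hrange.mp hnr)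
      exact ⟨hpd.isUnit, hpd⟩
  · intro hnr
    have hnr' := hrange.mp hnr
    have hpd := aux_W_posdef M v hinj hvv hnr'
    have hApd := aux_A_posdef M hinj
    have hAdet : IsUnit (Mᵀ * M).det := (Matrix.isUnit_iff_isUnit_det _).mp hApd.isUnit
    set A := Mᵀ * M with hA
    set u := Mᵀ *ᵥ v with hu
    set w := A⁻¹ *ᵥ u with hw
    set t := u ⬝ᵥ w with ht
    -- pinv M *ᵥ v = w
    have hw_eq : (pinv M) *ᵥ v = w := by
      rw [pinv, ← mulVec_mulVec]
    -- scalar equality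
    have ht_eq : dotp v ((M * pinv M) *ᵥ v) = t := by
      show v ⬝ᵥ _ = t
      rw [← mulVec_mulVec, hw_eq, dotProduct_mulVec, ← mulVec_transpose]
    have hAw : A *ᵥ w = u := by
      rw [hw, mulVec_mulVec, mul_nonsing_inv _ hAdet, one_mulVec]
    -- c ≠ 0
    have hc : (1:ℝ) - t ≠ 0 := by
      by_cases hw0 : w = 0
      · rw [ht, hw0, dotProduct_zero]; norm_num
      · have hq := hpd.dotProduct_mulVec_pos hw0
        rw [star_trivial, aux_quad' M v hvv] at hq
        have e1 : (M *ᵥ w) ⬝ᵥ (M *ᵥ w) = t := by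
          rw [dotProduct_mulVec, ← mulVec_transpose, mulVec_mulVec, ← hA, hAw]
        have e2 : v ⬝ᵥ (M *ᵥ w) = t := by
          rw [dotProduct_mulVec, ← mulVec_transpose, ← hu]
        rw [e1, e2] at hq
        intro hceq
        have ht1 : t = 1 := by linarith
        rw [ht1] at hq
        norm_num at hq
    show _ = _ + (1 - dotp v ((M * pinv M) *ᵥ v))⁻¹ • vecMulVec ((pinv M) *ᵥ v) ((pinv M) *ᵥ v)
    rw [ht_eq, hw_eq]
    exact inv_eq_right_inv (aux_inverse M v hAdet hc)
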